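/- arXiv:1210.2457 — 2 statements merged into one kernel-verified Lean document; each statement's English description precedes it below -/
import Mathlib

section
/- Let w ∈ V⁺ be a nonempty finite word with LAR(w) = v_k v_{k−1} ⋯ v_1, and suppose Score_F(w) > 0 with F = {v_1, …, v_i}. Then Acc_F(w) ∈ {∅} ∪ { {v_1, …, v_j} : j < i }. -/
variable {V : Type*}

/-- One step of the score/accumulator update: reading letter `v` after having
score/accumulator pair `s` for the set `F`. -/
def mgStep [DecidableEq V] (F : Finset V) (s : ℕ × Finset V) (v : V) : ℕ × Finset V :=
  if v ∈ F then
    if s.2 = F.erase v then (s.1 + 1, (∅ : Finset V)) else (s.1, insert v s.2)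
  else (0, (∅ : Finset V))

/-- `scoreAcc F w = (Score_F(w), Acc_F(w))` for a (nonempty) finite word `w`. -/
def scoreAcc [DecidableEq V] (F : Finset V) (w : List V) : ℕ × Finset V :=
  w.foldl (mgStep F) (0, ∅)

variable {V : Type*}

/-- One step of the latest-appearance-record update. -/
def larStep [DecidableEq V] (ℓ : List V) (v : V) : List V := ℓ.erase v ++ [v]

/-- The latest appearance record `LAR(w)` of a finite word. -/
def LARof [DecidableEq V] (w : List V) : List V := w.foldl larStep []

lemma scoreAcc_append [DecidableEq V] (F : Finset V) (w : List V) (v : V) :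
    scoreAcc F (w ++ [v]) = mgStep F (scoreAcc F w) v := by
  simp [scoreAcc, List.foldl_append]

lemma LARof_append [DecidableEq V] (w : List V) (v : V) :
    LARof (w ++ [v]) = (LARof w).erase v ++ [v] := by
  simp [LARof, List.foldl_append, larStep]

lemma LARof_nodup [DecidableEq V] (w : List V) : (LARof w).Nodup := by
  induction w using List.reverseRecOn with
  | nil => simp [LARof]
  | append_singleton w v ih =>
    rw [LARof_append]
    refine List.Nodup.append (ih.erase v) (List.nodup_singleton v) ?_
    intro a ha hb
    simp at hb
    subst hb
    exact (List.Nodup.not_mem_erase ih) ha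

/-- Main invariant: the accumulator is a proper subset of `F` and is the
set of letters of some suffix of the LAR. -/
lemma acc_invariant [DecidableEq V] (F : Finset V) (hFne : F.Nonempty) (w : List V) :
    (scoreAcc F w).2 ⊆ F ∧ (scoreAcc F w).2 ≠ F ∧
      ∃ t, t <:+ LARof w ∧ (scoreAcc F w).2 = t.toFinset := by
  induction w using List.reverseRecOn with
  | nil =>
    refine ⟨by simp [scoreAcc], ?_, [], by simp [LARof], by simp [scoreAcc]⟩
    simp [scoreAcc]
    exact fun h => hFne.ne_empty h.symm
  | append_singleton w v ih =>
    obtain ⟨hsub, hne, t, hsuf, hA⟩ := ih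
    rw [scoreAcc_append, LARof_append]
    unfold mgStep
    by_cases hvF : v ∈ F
    · by_cases hacc : (scoreAcc F w).2 = F.erase v
      · simp only [hvF, if_true, hacc, if_true]
        exact ⟨by simp, fun h => hFne.ne_empty h.symm,
          [], List.nil_suffix, by simp⟩
      · simp only [hvF, if_true, hacc, if_false]
        refine ⟨Finset.insert_subset hvF hsub, ?_, ?_⟩
        · -- insert v A ≠ F
          intro h
          by_cases hvA : v ∈ (scoreAcc F w).2
          · rw [Finset.insert_eq_self.mpr hvA] at h
            exact hne h
          · apply hacc
            calc (scoreAcc F w).2 = (insert v (scoreAcc F w).2).erase v :=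
                  (Finset.erase_insert hvA).symm
              _ = F.erase v := by rw [h]
        · -- suffix structure
          obtain ⟨p, hp⟩ := hsuf
          have hnd : (LARof w).Nodup := LARof_nodup w
          have htnd : t.Nodup := (List.IsSuffix.sublist ⟨p, hp⟩).nodup hnd
          by_cases hvt : v ∈ t
          · refine ⟨t.erase v ++ [v], ?_, ?_⟩
            · have hvp : v ∉ p := by
                intro hvp
                rw [← hp] at hnd
                exact (List.disjoint_of_nodup_append hnd) hvp hvt
              have : (LARof w).erase v = p ++ t.erase v := by
                rw [← hp, List.erase_append_right _ hvp]
              rw [this]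
              exact ⟨p, by simp⟩
            · rw [hA]
              ext a
              simp only [List.toFinset_append, Finset.mem_union, List.mem_toFinset,
                htnd.mem_erase_iff, List.toFinset_cons, List.toFinset_nil,
                Finset.mem_insert, Finset.notMem_empty, or_false]
              constructor
              · rintro (rfl | ha)
                · exact Or.inr rfl
                · by_cases h' : a = v
                  · exact Or.inr h'
                  · exact Or.inl ⟨h', ha⟩
              · rintro (⟨-, ha⟩ | rfl)
                · exact Or.inr ha
                · exact Or.inl rfl
          · refine ⟨t ++ [v], ?_, ?_⟩
            · have hts : t <:+ (LARof w).erase v := by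
                by_cases hvp : v ∈ p
                · rw [← hp, List.erase_append_left _ hvp]
                  exact ⟨p.erase v, rfl⟩
                · have : v ∉ LARof w := by
                    rw [← hp]; simp [hvp, hvt]
                  rw [List.erase_of_not_mem this]
                  exact ⟨p, hp⟩
              obtain ⟨q, hq⟩ := hts
              exact ⟨q, by rw [← hq, List.append_assoc]⟩
            · rw [hA]; ext a; simp [or_comm]
    · simp only [hvF, if_false]
      refine ⟨by simp, fun h => hFne.ne_empty h.symm, [], List.nil_suffix, by simp⟩

/-- If `LAR(w) = v_k ⋯ v_1`, `Score_F(w) > 0` and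
`F = {v_1, …, v_i}`, then `Acc_F(w)` is either empty or equal to
`{v_1, …, v_j}` for some `j < i`. -/
theorem acc_of_score_pos [DecidableEq V] (w : List V) (hw : w ≠ []) (i : ℕ)
    (h1 : 1 ≤ i) (hik : i ≤ (LARof w).length) (F : Finset V)
    (hF : F = ((LARof w).drop ((LARof w).length - i)).toFinset)
    (hpos : 0 < (scoreAcc F w).1) :
    (scoreAcc F w).2 = ∅ ∨
      ∃ j, 1 ≤ j ∧ j < i ∧
        (scoreAcc F w).2 = ((LARof w).drop ((LARof w).length - j)).toFinset := by
  have hnd : (LARof w).Nodup := LARof_nodup w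
  have hdnd : (((LARof w).drop ((LARof w).length - i))).Nodup :=
    (List.drop_sublist _ _).nodup hnd
  have hcard : F.card = i := by
    rw [hF, List.toFinset_card_of_nodup hdnd, List.length_drop]
    omega
  have hFne : F.Nonempty := Finset.card_pos.mp (by omega)
  obtain ⟨hsub, hne, t, hsuf, hA⟩ := acc_invariant F hFne w
  by_cases h0 : (scoreAcc F w).2 = ∅
  · exact Or.inl h0
  · right
    have htnd : t.Nodup := hsuf.sublist.nodup hnd
    have hAcard : (scoreAcc F w).2.card = t.length := by
      rw [hA, List.toFinset_card_of_nodup htnd]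
    have hlt : (scoreAcc F w).2.card < i := by
      rw [← hcard]
      exact Finset.card_lt_card (lt_of_le_of_ne hsub hne)
    refine ⟨t.length, ?_, by omega, ?_⟩
    · rcases Nat.eq_zero_or_pos t.length with h | h
      · exfalso
        apply h0
        rw [hA, List.length_eq_zero_iff.mp h]
        simp
      · exact h
    · have := List.suffix_iff_eq_drop.mp hsuf
      rw [hA, ← this]
end

section
/- Let G = (A, Win) be a game with vertex set V that is safety reducible with language L(𝔄) for a DFA 𝔄 = (Q, V, q_0, δ, F_𝔄), and let G' = (A × 𝔄, V × F_𝔄) be the associated safety game on the product arena. Then (1) for every vertex v: v ∈ W_0(G) if and only if (v, δ(q_0, v)) ∈ W_0(G'); and (2) Player 0 has a finite-state winning strategy from W_0(G) with memory states Q. -/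
/-- An arena: a directed graph without terminal vertices, with the positions `V0`
of Player 0; Player 1's positions are the complement. -/
structure Arena (V : Type*) where
  V0 : Set V
  E : V → V → Prop
  succ : ∀ v, ∃ u, E v u

/-- The positions of Player `i`. -/
def Arena.pos (A : Arena V) (i : Fin 2) : Set V := if i = 0 then A.V0 else A.V0ᶜ

/-- An infinite play in the arena. -/
def IsPlay (A : Arena V) (ρ : ℕ → V) : Prop := ∀ n, A.E (ρ n) (ρ (n + 1))

/-- The prefix `ρ_0 ⋯ ρ_{n-1}` (of length `n`) of an infinite word. -/
def prefixList (ρ : ℕ → V) (n : ℕ) : List V := (List.range n).map ρ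

/-- The set of letters occurring infinitely often. -/
def infSet (ρ : ℕ → V) : Set V := {v | ∀ N, ∃ n, N ≤ n ∧ ρ n = v}

/-- The infinity set as a finset. -/
noncomputable def infFinset [Fintype V] (ρ : ℕ → V) : Finset V :=
  (Set.toFinite (infSet ρ)).toFinset

/-- A loop: a strongly connected subset, i.e. any two of its vertices are joined
by a path visiting only vertices of the set. -/
def IsLoop (A : Arena V) (C : Set V) : Prop :=
  ∀ u ∈ C, ∀ u' ∈ C, Relation.ReflTransGen (fun a b => A.E a b ∧ a ∈ C ∧ b ∈ C) u u'

/-- A strategy, given as a function from (history, current vertex) to the next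
vertex, which must move along an edge. -/
def IsStrat (A : Arena V) (σ : List V → V → V) : Prop := ∀ w v, A.E v (σ w v)

/-- A play consistent with the strategy `σ` of Player `i`. -/
def ConsWith (A : Arena V) (i : Fin 2) (σ : List V → V → V) (ρ : ℕ → V) : Prop :=
  IsPlay A ρ ∧ ∀ n, ρ n ∈ A.pos i → ρ (n + 1) = σ (prefixList ρ n) (ρ n)

/-- The winning region of Player `i` in the Muller game on `A` with winning
families `Fam 0`, `Fam 1`. -/
def MullerWinRegion [Fintype V] [DecidableEq V] (A : Arena V)
    (Fam : Fin 2 → Set (Finset V)) (i : Fin 2) : Set V :=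
  {v | ∃ σ, IsStrat A σ ∧ ∀ ρ, ρ 0 = v → ConsWith A i σ ρ → infFinset ρ ∈ Fam i}

/-- `memState init upd w v` is the memory state `upd*(w · v)` reached after the
play prefix `w · v`. -/
def memState {M : Type*} (init : V → M) (upd : M → V → M) : List V → V → M
  | [], v => init v
  | a :: l, v => upd (l.foldl upd (init a)) v

/-- The expanded arena `A × M` of an arena and a memory structure. -/
def prodArena {M : Type*} (A : Arena V) (upd : M → V → M) : Arena (V × M) where
  V0 := {p | p.1 ∈ A.V0}
  E p q := A.E p.1 q.1 ∧ upd p.2 q.1 = q.2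
  succ p := by
    obtain ⟨u, hu⟩ := A.succ p.1
    exact ⟨(u, upd p.2 u), hu, rfl⟩

/-- The extended play in `A × M` of a play in `A`. -/
def extPlay {M : Type*} (init : V → M) (upd : M → V → M) (ρ : ℕ → V) : ℕ → V × M :=
  fun n => (ρ n, memState init upd (prefixList ρ n) (ρ n))

/-- A play is winning for Player `i` iff it lies in `Win` (for `i = 0`), resp.
outside `Win` (for `i = 1`). -/
def WinFor {α : Type*} (Win : Set (ℕ → α)) (i : Fin 2) (ρ : ℕ → α) : Prop :=
  if i = 0 then ρ ∈ Win else ρ ∉ Win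

/-- The winning region of Player 0 in the game `(A, Win)`. -/
def GameWin0 (A : Arena V) (Win : Set (ℕ → V)) : Set V :=
  {v | ∃ σ, IsStrat A σ ∧ ∀ ρ, ρ 0 = v → ConsWith A 0 σ ρ → ρ ∈ Win}

-- AUX START
def consSeq {α : Type*} (p : α) (τ : ℕ → α) : ℕ → α
  | 0 => p
  | n + 1 => τ n

lemma prefixList_zero {α : Type*} (ρ : ℕ → α) : prefixList ρ 0 = [] := rfl

lemma prefixList_succ {α : Type*} (ρ : ℕ → α) (n : ℕ) :
    prefixList ρ (n + 1) = prefixList ρ n ++ [ρ n] := by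
  simp [prefixList, List.range_succ]

lemma prefixList_consSeq {α : Type*} (p : α) (τ : ℕ → α) (n : ℕ) :
    prefixList (consSeq p τ) (n + 1) = p :: prefixList τ n := by
  induction n with
  | zero => simp [prefixList_succ, prefixList_zero, consSeq]
  | succ k ih => rw [prefixList_succ, ih, prefixList_succ]; rfl

lemma memState_foldl {α Q : Type*} (q0 : Q) (δ : Q → α → Q) (w : List α) (v : α) :
    memState (fun x => δ q0 x) δ w v = (w ++ [v]).foldl δ q0 := by
  cases w with
  | nil => simp [memState]
  | cons a l => simp [memState, List.foldl_append]

lemma pos_zero {α : Type*} (A : Arena α) : A.pos 0 = A.V0 := rfl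

/-- From any vertex there is a play consistent with a given strategy. -/
lemma exists_play {α : Type*} (A : Arena α) (σ : List α → α → α) (hσ : IsStrat A σ) (v : α) :
    ∃ ρ : ℕ → α, ρ 0 = v ∧ ConsWith A 0 σ ρ := by
  classical
  set step : List α × α → List α × α := fun p =>
    (p.1 ++ [p.2], if p.2 ∈ A.pos 0 then σ p.1 p.2 else Classical.choose (A.succ p.2)) with hstep
  set g : ℕ → List α × α := fun n => step^[n] ([], v) with hg
  set ρ : ℕ → α := fun n => (g n).2 with hρ
  have hgsucc : ∀ n, g (n + 1) = step (g n) := by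
    intro n; simp [hg, Function.iterate_succ_apply']
  have hpref : ∀ n, (g n).1 = prefixList ρ n := by
    intro n; induction n with
    | zero => rfl
    | succ k ih => rw [hgsucc, prefixList_succ, ← ih]
  have hρsucc : ∀ n, ρ (n + 1) =
      if ρ n ∈ A.pos 0 then σ (prefixList ρ n) (ρ n) else Classical.choose (A.succ (ρ n)) := by
    intro n
    show (g (n + 1)).2 = _
    rw [hgsucc, ← hpref]
  have hplay : IsPlay A ρ := by
    intro n
    rw [hρsucc]
    split
    · exact hσ _ _
    · exact Classical.choose_spec (A.succ (ρ n))
  exact ⟨ρ, rfl, hplay, fun n hn => by rw [hρsucc, if_pos hn]⟩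

/-- One-step preservation of the winning region. -/
lemma GameWin0_of_next {α : Type*} (A : Arena α) (Win : Set (ℕ → α))
    (hshift : ∀ p τ, consSeq p τ ∈ Win → τ ∈ Win)
    {p u : α} {σ : List α → α → α} (hσ : IsStrat A σ)
    (hwin : ∀ ρ, ρ 0 = p → ConsWith A 0 σ ρ → ρ ∈ Win)
    (hE : A.E p u) (hu : p ∈ A.pos 0 → u = σ [] p) :
    u ∈ GameWin0 A Win := by
  refine ⟨fun w x => σ (p :: w) x, fun w x => hσ _ _, fun τ hτ0 hcons => ?_⟩
  have hplay : IsPlay A (consSeq p τ) := by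
    intro n
    cases n with
    | zero => show A.E p (τ 0); rw [hτ0]; exact hE
    | succ k => exact hcons.1 k
  have hcons' : ConsWith A 0 σ (consSeq p τ) := by
    refine ⟨hplay, fun n hn => ?_⟩
    cases n with
    | zero =>
      show τ 0 = σ (prefixList (consSeq p τ) 0) p
      rw [prefixList_zero, hτ0]
      exact hu hn
    | succ k =>
      show τ (k + 1) = σ (prefixList (consSeq p τ) (k + 1)) (τ k)
      rw [prefixList_consSeq]
      exact hcons.2 k hn
  exact hshift _ _ (hwin _ rfl hcons')
/-- If the game `(A, Win)` is safety reducible with the language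
of the DFA `𝔄 = (Q, V, q0, δ, Facc)`, then, with `G'` the safety game on the
product arena `A × 𝔄` with safe vertices `V × Facc`:
(1) `v ∈ W_0(G)` iff `(v, δ(q0, v)) ∈ W_0(G')`, and
(2) Player 0 has a finite-state winning strategy from `W_0(G)` with memory
states `Q` (with `init v = δ q0 v` and `upd = δ`). -/
theorem safety_reduction {Q : Type*} [Fintype V] [Finite Q] (A : Arena V)
    (Win : Set (ℕ → V)) (q0 : Q) (δ : Q → V → Q) (Facc : Set Q)
    (hL1 : ∀ ρ, IsPlay A ρ →
      (∀ n, (prefixList ρ (n + 1)).foldl δ q0 ∈ Facc) → ρ ∈ Win)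
    (hL2 : ∀ v ∈ GameWin0 A Win, ∃ σ, IsStrat A σ ∧
      ∀ ρ, ρ 0 = v → ConsWith A 0 σ ρ →
        ∀ n, (prefixList ρ (n + 1)).foldl δ q0 ∈ Facc) :
    (∀ v, v ∈ GameWin0 A Win ↔
        (v, δ q0 v) ∈
          GameWin0 (prodArena A δ) {ρ' : ℕ → V × Q | ∀ n, (ρ' n).2 ∈ Facc}) ∧
      ∃ nxt : V → Q → V, (∀ v q, A.E v (nxt v q)) ∧
        ∀ v ∈ GameWin0 A Win, ∀ ρ, ρ 0 = v →
          ConsWith A 0 (fun w u => nxt u (memState (fun x => δ q0 x) δ w u)) ρ →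
          ρ ∈ Win := by
  classical
  set A' : Arena (V × Q) := prodArena A δ with hA'
  set Safe : Set (ℕ → V × Q) := {ρ' : ℕ → V × Q | ∀ n, (ρ' n).2 ∈ Facc} with hSafe
  set X : Set (V × Q) := GameWin0 A' Safe with hX
  have hshift : ∀ (p : V × Q) τ, consSeq p τ ∈ Safe → τ ∈ Safe :=
    fun p τ h n => h (n + 1)
  -- the winning region of the safety game consists of safe vertices
  have hXsafe : ∀ p ∈ X, p.2 ∈ Facc := by
    rintro p ⟨σ, hσ, hwin⟩
    obtain ⟨ρ, h0, hcons⟩ := exists_play A' σ hσ p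
    have := hwin ρ h0 hcons 0
    rwa [h0] at this
  -- forward direction of (1)
  have forward : ∀ v ∈ GameWin0 A Win, (v, δ q0 v) ∈ X := by
    intro v hv
    obtain ⟨σ, hσ, hsafe⟩ := hL2 v hv
    refine ⟨fun w p => (σ (w.map Prod.fst) p.1, δ p.2 (σ (w.map Prod.fst) p.1)),
      fun w p => ⟨hσ _ _, rfl⟩, fun ρ' h0 hcons n => ?_⟩
    set ρ : ℕ → V := fun k => (ρ' k).1 with hρ
    have hρplay : IsPlay A ρ := fun k => (hcons.1 k).1
    have hmap : ∀ k, (prefixList ρ' k).map Prod.fst = prefixList ρ k := by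
      intro k; simp [prefixList, List.map_map]; intro a _; rfl
    have hcons' : ConsWith A 0 σ ρ := by
      refine ⟨hρplay, fun k hk => ?_⟩
      have hk' : ρ' k ∈ A'.pos 0 := hk
      have := congrArg Prod.fst (hcons.2 k hk')
      simpa [hmap] using this
    have h0' : ρ 0 = v := by rw [hρ]; simp [h0]
    have hsafe' := hsafe ρ h0' hcons'
    have hstate : ∀ k, (ρ' k).2 = (prefixList ρ (k + 1)).foldl δ q0 := by
      intro k; induction k with
      | zero =>
        rw [prefixList_succ, prefixList_zero]
        simp [h0, h0']
      | succ k ih =>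
        rw [prefixList_succ (n := k + 1), List.foldl_append, ← ih]
        exact ((hcons.1 k).2).symm
    rw [hstate n]; exact hsafe' n
  -- the uniform positional next-move function on the product
  have hchoice : ∀ p : V × Q, ∃ u' : V × Q, A'.E p u' ∧ ((p ∈ X ∧ p.1 ∈ A.V0) → u' ∈ X) := by
    intro p
    by_cases h : p ∈ X ∧ p.1 ∈ A.V0
    · obtain ⟨σ, hσ, hwin⟩ := h.1
      refine ⟨σ [] p, hσ [] p, fun _ => ?_⟩
      exact GameWin0_of_next A' Safe hshift hσ hwin (hσ [] p) (fun _ => rfl)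
    · obtain ⟨u', hu'⟩ := A'.succ p
      exact ⟨u', hu', fun h' => absurd h' h⟩
  choose f hfE hfX using hchoice
  set nxt : V → Q → V := fun u q => (f (u, q)).1 with hnxt
  have hnxtE : ∀ u q, A.E u (nxt u q) := fun u q => (hfE (u, q)).1
  have hlift : ∀ u q, ((nxt u q, δ q (nxt u q)) : V × Q) = f (u, q) := by
    intro u q
    have := (hfE (u, q)).2
    exact Prod.ext rfl this
  -- the key invariant: plays consistent with the finite-state strategy stay in X
  have key : ∀ ρ : ℕ → V,
      ConsWith A 0 (fun w u => nxt u (memState (fun x => δ q0 x) δ w u)) ρ →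
      (ρ 0, δ q0 (ρ 0)) ∈ X →
      ∀ n, (ρ n, (prefixList ρ (n + 1)).foldl δ q0) ∈ X := by
    intro ρ hcons h0 n
    induction n with
    | zero =>
      rw [prefixList_succ, prefixList_zero]
      exact h0
    | succ n ih =>
      set qn : Q := (prefixList ρ (n + 1)).foldl δ q0 with hqn
      have hst : (prefixList ρ (n + 2)).foldl δ q0 = δ qn (ρ (n + 1)) := by
        rw [prefixList_succ (n := n + 1), List.foldl_append]; rfl
      have hmem : memState (fun x => δ q0 x) δ (prefixList ρ n) (ρ n) = qn := by
        rw [memState_foldl, ← prefixList_succ]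
      by_cases hv : ρ n ∈ A.V0
      · have := hcons.2 n hv
        have hρn1 : ρ (n + 1) = nxt (ρ n) qn := by rw [this]; simp only [hmem]
        rw [hst, hρn1, hlift]
        exact hfX (ρ n, qn) ⟨ih, hv⟩
      · have hE' : A'.E (ρ n, qn) (ρ (n + 1), (prefixList ρ (n + 2)).foldl δ q0) := by
          refine ⟨hcons.1 n, ?_⟩
          rw [hst]
        obtain ⟨σ, hσ, hwin⟩ := ih
        exact GameWin0_of_next A' Safe hshift hσ hwin hE' (fun h => absurd h hv)
  have conclude : ∀ ρ : ℕ → V,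
      ConsWith A 0 (fun w u => nxt u (memState (fun x => δ q0 x) δ w u)) ρ →
      (ρ 0, δ q0 (ρ 0)) ∈ X → ρ ∈ Win := by
    intro ρ hcons h0
    exact hL1 ρ hcons.1 (fun n => hXsafe _ (key ρ hcons h0 n))
  constructor
  · intro v
    constructor
    · exact forward v
    · intro hv'
      exact ⟨fun w u => nxt u (memState (fun x => δ q0 x) δ w u),
        fun w u => hnxtE _ _,
        fun ρ h0 hcons => conclude ρ hcons (by rw [h0]; exact hv')⟩
  · exact ⟨nxt, hnxtE, fun v hv ρ h0 hcons =>
      conclude ρ hcons (by rw [h0]; exact forward v hv)⟩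
end
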